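/- Let R be a commutative ring, I an ideal of R, and d₁, …, dₙ derivations of R each satisfying d_j(I) ⊆ I. Then for all x, y ∈ R with x·y ∈ I, one has x^(n+1) · (d₁ ∘ ⋯ ∘ dₙ)(y) ∈ I. -/

import Mathlib

/-- The composition `d₁ ∘ ⋯ ∘ dₙ` of a finite list of derivations of `R`
(the empty list giving the identity map of `R`). -/
def List.derComp {R : Type*} [CommRing R] (l : List (Derivation ℤ R R)) : R → R :=
  l.foldr (fun (d : Derivation ℤ R R) (f : R → R) => ⇑d ∘ f) id

/-- If `I` is an ideal stable under each of the derivations `d₁, …, dₙ`, and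
`x * y ∈ I`, then `x ^ (n + 1) * (d₁ ∘ ⋯ ∘ dₙ)(y) ∈ I`. -/
theorem stmt_2 {R : Type*} [CommRing R] (I : Ideal R)
    (l : List (Derivation ℤ R R)) (hl : ∀ d ∈ l, ∀ a ∈ I, d a ∈ I)
    (x y : R) (hxy : x * y ∈ I) :
    x ^ (l.length + 1) * l.derComp y ∈ I := by
  induction l with
  | nil => simpa [List.derComp] using hxy
  | cons d t ih =>
    have h1 : x ^ (t.length + 1) * t.derComp y ∈ I :=
      ih (fun d' hd' => hl d' (List.mem_cons_of_mem _ hd'))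
    set z := t.derComp y with hz
    have h2 : d (x ^ (t.length + 1) * z) ∈ I := hl d List.mem_cons_self _ h1
    rw [Derivation.leibniz] at h2
    have h3 : x * (x ^ (t.length + 1) • d z + z • d (x ^ (t.length + 1))) ∈ I :=
      I.mul_mem_left x h2
    have h4 : ((t.length + 1 : ℕ) : R) * d x * (x ^ (t.length + 1) * z) ∈ I :=
      I.mul_mem_left _ h1
    have key : x ^ ((d :: t).length + 1) * (d :: t).derComp y =
        x * (x ^ (t.length + 1) • d z + z • d (x ^ (t.length + 1))) -
          ((t.length + 1 : ℕ) : R) * d x * (x ^ (t.length + 1) * z) := by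
      have : (d :: t).derComp y = d z := rfl
      rw [this, Derivation.leibniz_pow, List.length_cons]
      simp only [smul_eq_mul, nsmul_eq_mul, Nat.add_sub_cancel]
      push_cast
      ring
    rw [key]
    exact I.sub_mem h3 h4
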